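/- Let k be a field of characteristic different from 2, let R = k[x,y]/(x² − y²), and let g : Spec R → Spec k[T] be the morphism of schemes induced by the k-algebra homomorphism k[T] → R sending T to the class of x. Then g is not topologically unramified: the diagonal morphism Spec R → Spec R ×_{Spec k[T]} Spec R is not an open map on underlying topological spaces. -/

import Mathlib

universe u

open AlgebraicGeometry CategoryTheory CategoryTheory.Limits MvPolynomial

/-- A morphism of schemes `f : Y ⟶ X` is topologically unramified if its diagonal morphism
`Y ⟶ Y ×ₓ Y` is an open map on underlying topological spaces. -/
def TopologicallyUnramified {Y X : AlgebraicGeometry.Scheme} (f : Y ⟶ X) : Prop :=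
  IsOpenMap (pullback.diagonal f).base

section Aux

open TensorProduct

variable (k : Type u) [Field k]

/-- `k[x,y]/(x² - y²)`. -/
abbrev TwoLinesRing : Type u :=
  MvPolynomial (Fin 2) k ⧸ Ideal.span {(X 0 : MvPolynomial (Fin 2) k) ^ 2 - X 1 ^ 2}

noncomputable def tlX : TwoLinesRing k :=
  Ideal.Quotient.mk _ (X 0)

noncomputable def tlY : TwoLinesRing k :=
  Ideal.Quotient.mk _ (X 1)

/-- The `k`-algebra map `k[x,y]/(x²-y²) → k[X]`, `x ↦ X`, `y ↦ c·X`, for `c² = 1`. -/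
noncomputable def lineHom (c : k) (hc : c * c = 1) : TwoLinesRing k →ₐ[k] Polynomial k :=
  Ideal.Quotient.liftₐ _ (MvPolynomial.aeval ![Polynomial.X, Polynomial.C c * Polynomial.X]) (by
    intro a ha
    rw [Ideal.mem_span_singleton] at ha
    obtain ⟨b, rfl⟩ := ha
    have h0 : (MvPolynomial.aeval (R := k) ![Polynomial.X, Polynomial.C c * Polynomial.X])
        ((X 0 : MvPolynomial (Fin 2) k) ^ 2 - X 1 ^ 2) = 0 := by
      simp only [map_sub, map_pow, MvPolynomial.aeval_X, Matrix.cons_val_zero,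
        Matrix.cons_val_one, Matrix.head_cons, mul_pow]
      have hc2 : c ^ 2 = 1 := by rw [pow_two]; exact hc
      rw [← map_pow, hc2, map_one, one_mul, sub_self]
    rw [map_mul, h0, zero_mul])

@[simp] lemma lineHom_tlX (c : k) (hc : c * c = 1) : lineHom k c hc (tlX k) = Polynomial.X := by
  exact (Ideal.Quotient.lift_mk _ _ _).trans (by simp)

@[simp] lemma lineHom_tlY (c : k) (hc : c * c = 1) :
    lineHom k c hc (tlY k) = Polynomial.C c * Polynomial.X := by
  exact (Ideal.Quotient.lift_mk _ _ _).trans (by simp)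

noncomputable instance tlAlgebra : Algebra (Polynomial k) (TwoLinesRing k) :=
  ((Polynomial.aeval (tlX k) : Polynomial k →ₐ[k] TwoLinesRing k).toRingHom).toAlgebra

set_option maxHeartbeats 2000000 in
set_option synthInstance.maxHeartbeats 800000 in
theorem key_not_open (hk : ringChar k ≠ 2) :
    ¬ IsOpenMap (pullback.diagonal
        (Spec.map (CommRingCat.ofHom
          (algebraMap (Polynomial k) (TwoLinesRing k))))).base := by
  classical
  intro h
  -- upgrade the two line maps to `k[T]`-algebra maps
  have hcomm : ∀ (c : k) (hc : c * c = 1) (p : Polynomial k),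
      lineHom k c hc (algebraMap (Polynomial k) (TwoLinesRing k) p) = p := by
    intro c hc p
    have : (lineHom k c hc).comp (Polynomial.aeval (tlX k)) = AlgHom.id k (Polynomial k) := by
      apply Polynomial.algHom_ext
      simp
    exact DFunLike.congr_fun this p
  let E₁ : TwoLinesRing k →ₐ[Polynomial k] Polynomial k :=
    { toRingHom := (lineHom k 1 (by ring)).toRingHom
      commutes' := fun p => by simpa using hcomm 1 (by ring) p }
  let E₂ : TwoLinesRing k →ₐ[Polynomial k] Polynomial k :=
    { toRingHom := (lineHom k (-1) (by ring)).toRingHom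
      commutes' := fun p => by simpa using hcomm (-1) (by ring) p }
  let E : TwoLinesRing k ⊗[Polynomial k] TwoLinesRing k →ₐ[Polynomial k] Polynomial k :=
    Algebra.TensorProduct.productMap E₁ E₂
  let μ : TwoLinesRing k ⊗[Polynomial k] TwoLinesRing k →ₐ[Polynomial k] TwoLinesRing k := Algebra.TensorProduct.lmul' (Polynomial k)
  -- evaluation at 0
  let ψ : Polynomial k →ₐ[k] k := Polynomial.aeval (0 : k)
  have heval : ∀ (b : TwoLinesRing k),
      ψ (lineHom k (-1) (by ring) b) = ψ (lineHom k 1 (by ring) b) := by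
    intro b
    obtain ⟨b, rfl⟩ := Ideal.Quotient.mk_surjective b
    have key : ∀ (c : k) (hc : c * c = 1),
        ψ (lineHom k c hc (Ideal.Quotient.mk _ b))
          = MvPolynomial.aeval (fun _ : Fin 2 => (0 : k)) b := by
      intro c hc
      show (ψ.comp ((lineHom k c hc).comp (Ideal.Quotient.mkₐ k _))) b = _
      congr 1
      rw [lineHom, Ideal.Quotient.liftₐ_comp, MvPolynomial.comp_aeval]
      congr 1
      funext i
      fin_cases i <;> simp [ψ]
    rw [key (-1) (by ring), key 1 (by ring)]
  have hfact : ∀ z : TwoLinesRing k ⊗[Polynomial k] TwoLinesRing k,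
      ψ (E z) = ψ (E₁ (μ z)) := by
    intro z
    induction z using TensorProduct.induction_on with
    | zero => simp
    | tmul a b =>
        show ψ (E₁ a * E₂ b) = ψ (E₁ (μ (a ⊗ₜ b)))
        rw [Algebra.TensorProduct.lmul'_apply_tmul, map_mul, map_mul, map_mul]
        congr 1
        exact heval b
    | add x y hx hy =>
        rw [map_add (f := E), map_add (f := μ), map_add (f := E₁), map_add (f := ψ),
          map_add (f := ψ), hx, hy]
  -- the two prime ideals
  let P : PrimeSpectrum (TwoLinesRing k ⊗[Polynomial k] TwoLinesRing k) :=
    ⟨RingHom.ker E.toRingHom, RingHom.ker_isPrime _⟩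
  let M : PrimeSpectrum (TwoLinesRing k ⊗[Polynomial k] TwoLinesRing k) :=
    ⟨RingHom.ker (ψ.toRingHom.comp E.toRingHom), RingHom.ker_isPrime _⟩
  have hPM : P ≤ M := by
    intro z hz
    have hz' : E z = 0 := hz
    show ψ (E z) = 0
    rw [hz', map_zero]
  -- the witness element
  let t : TwoLinesRing k ⊗[Polynomial k] TwoLinesRing k := (tlY k) ⊗ₜ 1 - 1 ⊗ₜ (tlY k)
  have htμ : μ t = 0 := by
    show μ ((tlY k) ⊗ₜ[Polynomial k] 1 - 1 ⊗ₜ[Polynomial k] (tlY k)) = 0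
    rw [map_sub,
      show μ ((tlY k) ⊗ₜ[Polynomial k] 1) = tlY k * 1 from
        Algebra.TensorProduct.lmul'_apply_tmul _ _,
      show μ ((1 : TwoLinesRing k) ⊗ₜ[Polynomial k] (tlY k)) = 1 * tlY k from
        Algebra.TensorProduct.lmul'_apply_tmul _ _]
    ring
  have htP : t ∉ P.asIdeal := by
    intro ht
    have hEt : E t = 0 := ht
    have hE1 : E₁ (tlY k) = Polynomial.C 1 * Polynomial.X := lineHom_tlY k 1 (by ring)
    have hE2 : E₂ (tlY k) = Polynomial.C (-1) * Polynomial.X := lineHom_tlY k (-1) (by ring)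
    have hEt' : E t = Polynomial.C 2 * Polynomial.X := by
      have e1 : E t = E₁ (tlY k) * E₂ 1 - E₁ 1 * E₂ (tlY k) := by
        show E ((tlY k) ⊗ₜ[Polynomial k] 1 - 1 ⊗ₜ[Polynomial k] (tlY k)) = _
        rw [map_sub]
        rfl
      rw [e1, map_one, map_one, mul_one, one_mul, hE1, hE2, ← sub_mul, ← map_sub]
      norm_num
    rw [hEt'] at hEt
    exact (mul_ne_zero (Polynomial.C_ne_zero.mpr (Ring.two_ne_zero hk))
      Polynomial.X_ne_zero) hEt
  -- topology
  rw [diagonal_SpecMap (Polynomial k) (TwoLinesRing k)] at h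
  have hiso : IsOpenMap ((pullbackSpecIso (Polynomial k) (TwoLinesRing k) (TwoLinesRing k)).hom.base) :=
    (TopCat.homeoOfIso ((Scheme.forgetToTop).mapIso (pullbackSpecIso (Polynomial k) (TwoLinesRing k) (TwoLinesRing k)))).isOpenMap
  have h2 : IsOpenMap (Spec.map (CommRingCat.ofHom (R := TwoLinesRing k ⊗[Polynomial k] TwoLinesRing k) (S := TwoLinesRing k) μ.toRingHom)).base := by
    have hcomp := hiso.comp h
    have e : (Spec.map (CommRingCat.ofHom (R := TwoLinesRing k ⊗[Polynomial k] TwoLinesRing k) (S := TwoLinesRing k) μ.toRingHom) ≫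
          (pullbackSpecIso (Polynomial k) (TwoLinesRing k) (TwoLinesRing k)).inv) ≫
          (pullbackSpecIso (Polynomial k) (TwoLinesRing k) (TwoLinesRing k)).hom
        = Spec.map (CommRingCat.ofHom (R := TwoLinesRing k ⊗[Polynomial k] TwoLinesRing k) (S := TwoLinesRing k) μ.toRingHom) := by
      rw [Category.assoc, Iso.inv_hom_id, Category.comp_id]
    have efun : (⇑(pullbackSpecIso (Polynomial k) (TwoLinesRing k) (TwoLinesRing k)).hom.base ∘
        ⇑(Spec.map (CommRingCat.ofHom (R := TwoLinesRing k ⊗[Polynomial k] TwoLinesRing k) (S := TwoLinesRing k) μ.toRingHom) ≫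
          (pullbackSpecIso (Polynomial k) (TwoLinesRing k) (TwoLinesRing k)).inv).base)
        = ⇑(Spec.map (CommRingCat.ofHom (R := TwoLinesRing k ⊗[Polynomial k] TwoLinesRing k) (S := TwoLinesRing k) μ.toRingHom)).base := by
      funext x
      rw [Function.comp_apply, ← Scheme.Hom.comp_apply, e]
    rwa [efun] at hcomp
  have hμsurj : Function.Surjective μ.toRingHom := fun a =>
    ⟨a ⊗ₜ 1, by simp [μ, Algebra.TensorProduct.lmul'_apply_tmul]⟩
  have hU : IsOpen (Set.range (PrimeSpectrum.comap (R := TwoLinesRing k ⊗[Polynomial k] TwoLinesRing k) (S := TwoLinesRing k) μ.toRingHom)) := by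
    have := h2 Set.univ isOpen_univ
    rwa [Set.image_univ, Spec.map_base] at this
  rw [range_comap_of_surjective (R := TwoLinesRing k ⊗[Polynomial k] TwoLinesRing k) (S := TwoLinesRing k) μ.toRingHom hμsurj] at hU
  -- M lies in the (allegedly open) image
  have hMmem : M ∈ PrimeSpectrum.zeroLocus (RingHom.ker μ.toRingHom : Set _) := by
    intro z hz
    have hz' : μ z = 0 := hz
    show ψ (E z) = 0
    rw [hfact z, hz', map_zero, map_zero]
  -- M is in the closure of {P}, so P is in the image too
  have hclos : M ∈ closure ({P} : Set (PrimeSpectrum (TwoLinesRing k ⊗[Polynomial k] TwoLinesRing k))) :=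
    (PrimeSpectrum.le_iff_mem_closure P M).mp hPM
  have hPmem : P ∈ PrimeSpectrum.zeroLocus (RingHom.ker μ.toRingHom : Set _) := by
    rcases (mem_closure_iff.mp hclos) _ hU hMmem with ⟨q, hq1, hq2⟩
    rwa [Set.mem_singleton_iff.mp hq2] at hq1
  have : t ∈ P.asIdeal := hPmem htμ
  exact htP this

end Aux

/-- Let `k` be a field of characteristic different from `2` and
`R = k[x,y]/(x² − y²)`.  The morphism `Spec R ⟶ Spec k[T]` induced by `T ↦ x` is not
topologically unramified. -/
theorem not_topologicallyUnramified_proj_two_lines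
    (k : Type u) [Field k] (hk : ringChar k ≠ 2) :
    ¬ TopologicallyUnramified
        (Spec.map (CommRingCat.ofHom
          (Polynomial.aeval
            ((Ideal.Quotient.mk
                (Ideal.span {(X 0 : MvPolynomial (Fin 2) k) ^ 2 - X 1 ^ 2}))
              (X 0)) :
            Polynomial k →ₐ[k]
              (MvPolynomial (Fin 2) k ⧸
                Ideal.span {(X 0 : MvPolynomial (Fin 2) k) ^ 2 - X 1 ^ 2})).toRingHom)) := by
  exact key_not_open k hk
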